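/- arXiv:2311.06277 — 3 statements merged into one kernel-verified Lean document; each statement's English description precedes it below -/
import Mathlib

section
/- Let ω ∈ 𝓑'₀ have power series expansion ω(z) = c₁z + c₂z² + c₃z³ + ⋯ on 𝔻. Then |c₁c₃ − c₂²| ≤ 1/4. -/
open Complex Metric


lemma cauchy_bound (g : ℂ → ℂ) (hg : DifferentiableOn ℂ g (ball 0 1))
    (hbd : ∀ z ∈ ball (0:ℂ) 1, ‖g z‖ ≤ 1) (n : ℕ) :
    ‖iteratedDeriv n g 0‖ ≤ (n.factorial : ℝ) := by
  have key : ∀ r : ℝ, 0 < r → r < 1 →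
      ‖iteratedDeriv n g 0‖ ≤ (n.factorial : ℝ) * (r⁻¹) ^ n := by
    intro r hr0 hr1
    set R : NNReal := ⟨r, hr0.le⟩ with hR
    have hRr : (R : ℝ) = r := rfl
    have hRpos : (0:NNReal) < R := by exact_mod_cast hr0
    have hsub : closedBall (0:ℂ) R ⊆ ball 0 1 := by
      apply closedBall_subset_ball; rw [hRr]; exact hr1
    have hps : HasFPowerSeriesOnBall g (cauchyPowerSeries g 0 R) 0 R :=
      (hg.mono hsub).hasFPowerSeriesOnBall hRpos
    have hmem : ∀ θ : ℝ, circleMap 0 R θ ∈ ball (0:ℂ) 1 := by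
      intro θ
      simp only [mem_ball, dist_zero_right, norm_circleMap_zero]
      rw [hRr, _root_.abs_of_nonneg hr0.le]; exact hr1
    have hfac := hps.factorial_smul (1:ℂ) n
    have hid : iteratedDeriv n g 0 = (n.factorial : ℂ) * (cauchyPowerSeries g 0 R n fun _ => 1) := by
      rw [iteratedDeriv_eq_iteratedFDeriv, ← hfac, nsmul_eq_mul]
    have hnorm : ‖cauchyPowerSeries g 0 R n‖ ≤ 1 * |(R:ℝ)|⁻¹ ^ n := by
      refine (norm_cauchyPowerSeries_le g 0 R n).trans ?_
      gcongr
      calc (2 * Real.pi)⁻¹ * ∫ θ : ℝ in (0)..2 * Real.pi, ‖g (circleMap 0 R θ)‖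
          ≤ (2 * Real.pi)⁻¹ * ∫ θ : ℝ in (0)..2 * Real.pi, (1:ℝ) := by
            gcongr
            have hint : IntervalIntegrable (fun θ : ℝ => ‖g (circleMap 0 R θ)‖)
                MeasureTheory.volume 0 (2*Real.pi) :=
              ((hg.continuousOn.comp (continuous_circleMap 0 R).continuousOn
                (fun θ _ => hmem θ)).norm).intervalIntegrable
            exact intervalIntegral.integral_mono_on Real.two_pi_pos.le hint
              intervalIntegrable_const (fun θ _ => hbd _ (hmem θ))
          _ ≤ 1 := by
            rw [intervalIntegral.integral_const, smul_eq_mul, mul_one, sub_zero,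
              inv_mul_cancel₀ Real.two_pi_pos.ne']
    have happ : ‖cauchyPowerSeries g 0 R n fun _ => 1‖ ≤ 1 * |(R:ℝ)|⁻¹ ^ n := by
      refine le_trans ?_ hnorm
      have := (cauchyPowerSeries g 0 R n).le_opNorm (fun _ => 1)
      simp at this
      simpa using this
    calc ‖iteratedDeriv n g 0‖
        = (n.factorial : ℝ) * ‖cauchyPowerSeries g 0 R n fun _ => 1‖ := by
          rw [hid, norm_mul, Complex.norm_natCast]
      _ ≤ (n.factorial : ℝ) * (1 * |(R:ℝ)|⁻¹ ^ n) := by gcongr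
      _ = (n.factorial : ℝ) * (r⁻¹) ^ n := by rw [hRr, _root_.abs_of_nonneg hr0.le, one_mul]
  have hlim : Filter.Tendsto (fun r : ℝ => (n.factorial : ℝ) * (r⁻¹) ^ n)
      (nhdsWithin 1 (Set.Iio 1)) (nhds ((n.factorial : ℝ))) := by
    have hca : ContinuousAt (fun r : ℝ => (n.factorial : ℝ) * (r⁻¹) ^ n) 1 :=
      (((continuousAt_id).inv₀ one_ne_zero).pow n).const_mul _
    have := hca.tendsto
    simp only [id, inv_one, one_pow, mul_one] at this
    exact this.mono_left nhdsWithin_le_nhds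
  refine ge_of_tendsto hlim ?_
  filter_upwards [Ioo_mem_nhdsLT_of_mem (by norm_num : (1:ℝ) ∈ Set.Ioc (1/2) 1)] with r hr
  exact key r (by linarith [hr.1]) hr.2


lemma coeff_eq (ω : ℂ → ℂ) (c : ℕ → ℂ)
    (hc : ∀ z ∈ ball (0:ℂ) 1, HasSum (fun n : ℕ => c (n + 1) * z ^ (n + 1)) (ω z)) :
    ∀ n : ℕ, iteratedDeriv n ω 0 = (n.factorial : ℂ) * (if n = 0 then 0 else c n) := by
  set c' : ℕ → ℂ := fun n => if n = 0 then 0 else c n with hc'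
  set q : FormalMultilinearSeries ℂ ℂ ℂ := FormalMultilinearSeries.ofScalars ℂ c' with hq
  have hsum : ∀ z ∈ ball (0:ℂ) 1, HasSum (fun n => c' n * z ^ n) (ω z) := by
    intro z hz
    have h1 := hc z hz
    have h2 : HasSum (fun n : ℕ => c' (n + 1) * z ^ (n + 1)) (ω z) := by
      simpa [hc'] using h1
    have := (hasSum_nat_add_iff (f := fun n => c' n * z ^ n) 1).mp (by simpa using h2)
    simpa [hc'] using this
  have hrad : 1 ≤ q.radius := by
    apply ENNReal.le_of_forall_nnreal_lt
    intro r hr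
    have hr1 : (r : ℝ) < 1 := by exact_mod_cast hr
    have hmem : (r : ℂ) ∈ ball (0:ℂ) 1 := by
      simp only [mem_ball, dist_zero_right, Complex.norm_real]
      simpa [_root_.abs_of_nonneg r.coe_nonneg] using hr1
    have hs : Summable (fun n => c' n * (r : ℂ) ^ n) := (hsum _ hmem).summable
    have ht : Filter.Tendsto (fun n => ‖q n‖ * (r:ℝ) ^ n) Filter.atTop (nhds 0) := by
      have := hs.tendsto_atTop_zero.norm
      simp only [norm_zero] at this
      convert this using 2 with n
      rw [hq, FormalMultilinearSeries.ofScalars_norm, norm_mul, norm_pow]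
      simp [_root_.abs_of_nonneg r.coe_nonneg]
    exact q.le_radius_of_isBigO (ht.isBigO_one ℝ)
  have hps : HasFPowerSeriesOnBall ω q 0 1 := by
    refine ⟨hrad, one_pos, fun {y} hy => ?_⟩
    have hy' : y ∈ ball (0:ℂ) 1 := by
      simpa [enorm_eq_nnnorm, ← NNReal.coe_lt_one] using hy
    have := hsum y hy'
    simp only [zero_add]
    convert this using 2 with n
    · rfl
    rw [hq, FormalMultilinearSeries.ofScalars_apply_eq, smul_eq_mul]
  intro n
  have hfac := hps.factorial_smul (1:ℂ) n
  rw [iteratedDeriv_eq_iteratedFDeriv, ← hfac, nsmul_eq_mul]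
  rw [hq, FormalMultilinearSeries.ofScalars_apply_eq, smul_eq_mul]
  simp [hc']

theorem stmt_13 (ω : ℂ → ℂ) (c : ℕ → ℂ)
    (hd : DifferentiableOn ℂ ω (ball 0 1))
    (h0 : ω 0 = 0)
    (hb : ∀ z ∈ ball (0:ℂ) 1, ‖deriv ω z‖ ≤ 1)
    (hc : ∀ z ∈ ball (0:ℂ) 1, HasSum (fun n : ℕ => c (n + 1) * z ^ (n + 1)) (ω z)) :
    ‖c 1 * c 3 - c 2^2‖ ≤ 1/4 := by
  set f : ℂ → ℂ := deriv ω with hf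
  have h0b : (0:ℂ) ∈ ball (0:ℂ) 1 := by simp
  have hneg : ∀ z : ℂ, z ∈ ball (0:ℂ) 1 → -z ∈ ball (0:ℂ) 1 := by
    intro z hz; simpa using hz
  have hAω : AnalyticOnNhd ℂ ω (ball 0 1) := hd.analyticOnNhd isOpen_ball
  have hAf : AnalyticOnNhd ℂ f (ball 0 1) := hAω.deriv
  have hAf' : AnalyticOnNhd ℂ (deriv f) (ball 0 1) := hAf.deriv
  have hco := coeff_eq ω c hc
  -- basic values
  have hval1 : f 0 = c 1 := by
    have := hco 1
    simpa [iteratedDeriv_one] using this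
  have hval2 : deriv f 0 = 2 * c 2 := by
    have h2 := hco 2
    rw [iteratedDeriv_succ', iteratedDeriv_one] at h2
    simpa using h2
  have hval3 : deriv (deriv f) 0 = 6 * c 3 := by
    have h3 := hco 3
    rw [iteratedDeriv_succ', iteratedDeriv_succ', iteratedDeriv_one] at h3
    norm_num at h3
    exact h3
  -- bound on 2 c 2
  have hb1 : ‖2 * c 2‖ ≤ 1 := by
    have := cauchy_bound f hAf.differentiableOn hb 1
    rw [iteratedDeriv_one, hval2] at this
    simpa using this
  -- the auxiliary even function
  set H : ℂ → ℂ := fun z => f z * f (-z) with hH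
  have hAH : AnalyticOnNhd ℂ H (ball 0 1) := by
    intro z hz
    exact (hAf z hz).mul ((hAf (-z) (hneg z hz)).comp (analyticAt_id.neg))
  have hHb : ∀ z ∈ ball (0:ℂ) 1, ‖H z‖ ≤ 1 := by
    intro z hz
    rw [hH]
    simp only [norm_mul]
    calc ‖f z‖ * ‖f (-z)‖ ≤ 1 * 1 :=
      mul_le_mul (hb z hz) (hb (-z) (hneg z hz)) (by positivity) (by norm_num)
    _ = 1 := by norm_num
  have hI2 : ‖iteratedDeriv 2 H 0‖ ≤ 2 := by
    have := cauchy_bound H hAH.differentiableOn hHb 2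
    norm_num at this
    exact this
  -- first derivative of H on the ball
  have hder1 : ∀ z ∈ ball (0:ℂ) 1, deriv H z = deriv f z * f (-z) - f z * deriv f (-z) := by
    intro z hz
    have hfz : HasDerivAt f (deriv f z) z := (hAf z hz).differentiableAt.hasDerivAt
    have hfn : HasDerivAt (fun w => f (-w)) (-deriv f (-z)) z := by
      have := ((hAf (-z) (hneg z hz)).differentiableAt.hasDerivAt).comp z (hasDerivAt_neg z)
      simpa [mul_comm, Function.comp_def] using this
    have := (hfz.mul hfn).deriv
    rw [show (f * fun w => f (-w)) = H from rfl] at this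
    rw [this]; ring
  have hEq : deriv H =ᶠ[nhds 0] fun z => deriv f z * f (-z) - f z * deriv f (-z) := by
    filter_upwards [isOpen_ball.mem_nhds h0b] with z hz using hder1 z hz
  -- second derivative at 0
  have hd2H : iteratedDeriv 2 H 0 = 12 * (c 1 * c 3) - 2 * (2 * c 2)^2 := by
    have hstep : iteratedDeriv 2 H 0 = deriv (deriv H) 0 := by
      rw [iteratedDeriv_succ, iteratedDeriv_one]
    rw [hstep, hEq.deriv_eq]
    have hd1 : HasDerivAt (deriv f) (deriv (deriv f) 0) 0 :=
      (hAf' 0 h0b).differentiableAt.hasDerivAt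
    have hd3 : HasDerivAt f (deriv f 0) 0 := (hAf 0 h0b).differentiableAt.hasDerivAt
    have hfn0 : HasDerivAt (fun w => f (-w)) (-(deriv f 0)) 0 := by
      have := ((hAf (-0) (by simpa using h0b)).differentiableAt.hasDerivAt).comp 0
        (hasDerivAt_neg (0:ℂ))
      simpa [mul_comm, Function.comp_def] using this
    have hfn0' : HasDerivAt (fun w => deriv f (-w)) (-(deriv (deriv f) 0)) 0 := by
      have := ((hAf' (-0) (by simpa using h0b)).differentiableAt.hasDerivAt).comp 0
        (hasDerivAt_neg (0:ℂ))
      simpa [mul_comm, Function.comp_def] using this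
    have hfn0'' : HasDerivAt (fun w : ℂ => f (-w)) (-(deriv f 0)) 0 := hfn0
    have htot := ((hd1.mul hfn0).sub (hd3.mul hfn0')).deriv
    rw [show (fun z => deriv f z * f (-z) - f z * deriv f (-z)) = ((deriv f * fun w => f (-w)) - (f * fun w => deriv f (-w))) from rfl, htot]
    simp only [neg_zero]
    rw [hval1, hval2, hval3]
    ring
  -- finish
  have key : ‖12 * (c 1 * c 3) - 2 * (2 * c 2)^2‖ ≤ 2 := hd2H ▸ hI2
  have e1 : c 1 * c 3 - c 2^2 =
      (12 * (c 1 * c 3) - 2 * (2 * c 2)^2) / 12 - (2 * c 2)^2 / 12 := by ring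
  rw [e1]
  calc ‖(12 * (c 1 * c 3) - 2 * (2 * c 2)^2) / 12 - (2 * c 2)^2 / 12‖
      ≤ ‖(12 * (c 1 * c 3) - 2 * (2 * c 2)^2) / 12‖
        + ‖(2 * c 2)^2 / 12‖ := by
        apply norm_sub_le
    _ = ‖12 * (c 1 * c 3) - 2 * (2 * c 2)^2‖ / 12
        + ‖2 * c 2‖^2 / 12 := by
        rw [norm_div, norm_div, norm_pow]
        norm_num
    _ ≤ 2 / 12 + 1 / 12 := by
        have h2 : ‖2 * c 2‖^2 ≤ 1 := by
          calc ‖2 * c 2‖^2 ≤ 1^2 := by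
                gcongr
            _ = 1 := one_pow 2
        exact add_le_add ((div_le_div_iff_of_pos_right (by norm_num)).mpr key)
          ((div_le_div_iff_of_pos_right (by norm_num)).mpr h2)
    _ = 1/4 := by norm_num
end

section
/- Let ω ∈ 𝓑'₀ have power series expansion ω(z) = c₁z + c₂z² + c₃z³ + ⋯ on 𝔻, let μ ∈ ℂ, and suppose |μ| ≥ (4/3)·|c₁|/(1 + |c₁|). Then |c₁c₃ − μc₂²| ≤ (1/12)·(3|μ| + 2(2 − 3|μ|)|c₁|² − (4 − 3|μ|)|c₁|⁴). -/
open Complex Metric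

lemma mobius_bound {a w : ℂ} (ha : ‖a‖ ≤ 1) (hw : ‖w‖ ≤ 1) :
    ‖w - a‖ ≤ ‖1 - (starRingEnd ℂ) a * w‖ := by
  have key : Complex.normSq (1 - (starRingEnd ℂ) a * w) - Complex.normSq (w - a)
      = (1 - Complex.normSq a) * (1 - Complex.normSq w) := by
    simp only [Complex.normSq_apply, Complex.sub_re, Complex.sub_im, Complex.mul_re,
      Complex.mul_im, Complex.one_re, Complex.one_im, Complex.conj_re, Complex.conj_im]
    ring
  have h1 : Complex.normSq a ≤ 1 := by rw [← Complex.sq_norm]; nlinarith [norm_nonneg a, norm_nonneg w, ha, hw]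
  have h2 : Complex.normSq w ≤ 1 := by rw [← Complex.sq_norm]; nlinarith [norm_nonneg a, norm_nonneg w, ha, hw]
  have h3 : Complex.normSq (w - a) ≤ Complex.normSq (1 - (starRingEnd ℂ) a * w) := by nlinarith [norm_nonneg a, norm_nonneg w, ha, hw]
  rw [Complex.norm_def, Complex.norm_def]
  exact Real.sqrt_le_sqrt h3

lemma const_of_max {φ : ℂ → ℂ} (hd : DifferentiableOn ℂ φ (ball 0 1))
    (hb : ∀ z ∈ ball (0:ℂ) 1, ‖φ z‖ ≤ 1) (heq : ‖φ 0‖ = 1) :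
    Set.EqOn φ (Function.const ℂ (φ 0)) (ball 0 1) := by
  apply Complex.eqOn_of_isPreconnected_of_isMaxOn_norm (convex_ball _ _).isPreconnected
    isOpen_ball hd (mem_ball_self one_pos)
  intro z hz
  simp only [Function.comp, Set.mem_setOf_eq]
  rw [heq]; exact hb z hz

lemma deriv_zero_of_const {φ : ℂ → ℂ} (h : Set.EqOn φ (Function.const ℂ (φ 0)) (ball 0 1)) :
    ∀ z ∈ ball (0:ℂ) 1, deriv φ z = 0 := by
  intro z hz
  have : φ =ᶠ[nhds z] Function.const ℂ (φ 0) :=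
    Filter.eventuallyEq_of_mem (isOpen_ball.mem_nhds hz) h
  rw [this.deriv_eq]; exact deriv_const z (φ 0)

noncomputable def mob (φ : ℂ → ℂ) : ℂ → ℂ :=
  fun z => (φ z - φ 0) / (1 - (starRingEnd ℂ) (φ 0) * φ z)

section Mob
variable {φ : ℂ → ℂ} (hd : DifferentiableOn ℂ φ (ball 0 1))
    (hb : ∀ z ∈ ball (0:ℂ) 1, ‖φ z‖ ≤ 1)
    (hlt : ‖φ 0‖ < 1)

include hb hlt in
lemma mob_den_ne {z : ℂ} (hz : z ∈ ball (0:ℂ) 1) :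
    1 - (starRingEnd ℂ) (φ 0) * φ z ≠ 0 := by
  intro h
  have h2 : ‖(starRingEnd ℂ) (φ 0) * φ z‖ < 1 := by
    rw [norm_mul, Complex.norm_conj]
    calc ‖φ 0‖ * ‖φ z‖ ≤ ‖φ 0‖ * 1 :=
          mul_le_mul_of_nonneg_left (hb z hz) (norm_nonneg _)
      _ < 1 := by simpa using hlt
  have : (1:ℂ) = (starRingEnd ℂ) (φ 0) * φ z := by linear_combination h
  rw [← this] at h2; simp at h2

include hd hb hlt in
lemma mob_diff : DifferentiableOn ℂ (mob φ) (ball 0 1) := by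
  exact DifferentiableOn.div (hd.sub_const _)
    ((differentiableOn_const _).sub ((differentiableOn_const _).mul hd))
    (fun z hz => mob_den_ne hb hlt hz)

include hb hlt in
lemma mob_bound {z : ℂ} (hz : z ∈ ball (0:ℂ) 1) : ‖mob φ z‖ ≤ 1 := by
  rw [mob, norm_div]
  rw [div_le_one (by
    have h := mob_den_ne hb hlt hz
    exact (norm_pos_iff.mpr h))]
  exact mobius_bound hlt.le (hb z hz)

lemma mob_zero : mob φ 0 = 0 := by simp [mob]

include hd hb hlt in
lemma mob_deriv {z : ℂ} (hz : z ∈ ball (0:ℂ) 1) :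
    deriv (mob φ) z = (1 - (Complex.normSq (φ 0) : ℂ)) * deriv φ z
      / (1 - (starRingEnd ℂ) (φ 0) * φ z)^2 := by
  have hφz : HasDerivAt φ (deriv φ z) z :=
    (hd.differentiableAt (isOpen_ball.mem_nhds hz)).hasDerivAt
  have h1 : HasDerivAt (fun w => φ w - φ 0) (deriv φ z) z := hφz.sub_const _
  have h2 : HasDerivAt (fun w => 1 - (starRingEnd ℂ) (φ 0) * φ w)
      (-((starRingEnd ℂ) (φ 0) * deriv φ z)) z := by
    simpa using ((hφz.const_mul ((starRingEnd ℂ) (φ 0))).const_sub 1)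
  have h3 : HasDerivAt (fun y => (φ y - φ 0) / (1 - (starRingEnd ℂ) (φ 0) * φ y)) _ z :=
    h1.div h2 (mob_den_ne hb hlt hz)
  have hmob : mob φ = fun y => (φ y - φ 0) / (1 - (starRingEnd ℂ) (φ 0) * φ y) := rfl
  rw [hmob, h3.deriv]
  have hden := mob_den_ne hb hlt hz
  have hconj : (starRingEnd ℂ) (φ 0) * φ 0 = (Complex.normSq (φ 0) : ℂ) := by
    rw [mul_comm, Complex.mul_conj]
  field_simp
  linear_combination (-(deriv φ z)) * hconj

end Mob

lemma abs_deriv_mob_le {φ : ℂ → ℂ} (hd : DifferentiableOn ℂ φ (ball 0 1))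
    (hb : ∀ z ∈ ball (0:ℂ) 1, ‖φ z‖ ≤ 1)
    (hlt : ‖φ 0‖ < 1) : ‖deriv (mob φ) 0‖ ≤ 1 := by
  by_contra hcon
  push_neg at hcon
  set X := ‖deriv (mob φ) 0‖ with hX
  have key : ∀ R : ℝ, 1 < R → X ≤ R := by
    intro R hR
    have hmaps : Set.MapsTo (mob φ) (ball 0 1) (ball (mob φ 0) R) := by
      intro z hz
      rw [mob_zero, mem_ball, dist_zero_right]
      exact lt_of_le_of_lt (mob_bound hb hlt hz) hR
    have := Complex.norm_deriv_le_div_of_mapsTo_ball (mob_diff hd hb hlt) (hmaps.mono_right ball_subset_closedBall) one_pos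
    rw [div_one] at this; exact this
  have := key ((1 + X)/2) (by linarith)
  linarith

lemma pickB {φ : ℂ → ℂ} (hd : DifferentiableOn ℂ φ (ball 0 1))
    (hb : ∀ z ∈ ball (0:ℂ) 1, ‖φ z‖ ≤ 1) :
    ‖deriv φ 0‖ ≤ 1 - ‖φ 0‖^2 := by
  have h0m : (0:ℂ) ∈ ball (0:ℂ) 1 := mem_ball_self one_pos
  have ha1 : ‖φ 0‖ ≤ 1 := hb 0 h0m
  rcases eq_or_lt_of_le ha1 with heq | hlt
  · have hzero := deriv_zero_of_const (const_of_max hd hb heq) 0 h0m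
    rw [hzero, norm_zero, heq]
    norm_num
  · -- Möbius case
    have hden0 : (1 : ℂ) - (starRingEnd ℂ) (φ 0) * φ 0 = 1 - (Complex.normSq (φ 0) : ℂ) := by
      rw [mul_comm, Complex.mul_conj]
    have hns : Complex.normSq (φ 0) < 1 := by
      rw [← Complex.sq_norm]; nlinarith [norm_nonneg (φ 0)]
    have hne : (1 : ℂ) - (Complex.normSq (φ 0) : ℂ) ≠ 0 := by
      intro h
      have : ((1 - Complex.normSq (φ 0) : ℝ) : ℂ) = 0 := by push_cast; linear_combination h
      rw [Complex.ofReal_eq_zero] at this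
      linarith
    have hder := mob_deriv hd hb hlt h0m
    rw [hden0] at hder
    have habs : ‖deriv (mob φ) 0‖
        = ‖deriv φ 0‖ / (1 - Complex.normSq (φ 0)) := by
      rw [hder, show ((1:ℂ) - (Complex.normSq (φ 0) : ℂ)) = ((1 - Complex.normSq (φ 0) : ℝ) : ℂ) by push_cast; ring]
      simp only [norm_div, norm_mul, norm_pow, Complex.norm_real, Real.norm_eq_abs]
      rw [abs_of_pos (by linarith : (0:ℝ) < 1 - Complex.normSq (φ 0))]
      have hpos : (0:ℝ) < 1 - Complex.normSq (φ 0) := by linarith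
      field_simp
    have hle := abs_deriv_mob_le hd hb hlt
    rw [habs, div_le_one (by linarith)] at hle
    rw [← Complex.sq_norm] at hle
    linarith

lemma mob_deriv2 {φ : ℂ → ℂ} (han : AnalyticOnNhd ℂ φ (ball 0 1))
    (hb : ∀ z ∈ ball (0:ℂ) 1, ‖φ z‖ ≤ 1)
    (hlt : ‖φ 0‖ < 1) :
    deriv (deriv (mob φ)) 0 =
      ((1 - (Complex.normSq (φ 0) : ℂ)) * deriv (deriv φ) 0
        + 2 * (starRingEnd ℂ) (φ 0) * (deriv φ 0)^2)
      / (1 - (Complex.normSq (φ 0) : ℂ))^2 := by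
  have h0m : (0:ℂ) ∈ ball (0:ℂ) 1 := mem_ball_self one_pos
  have hd : DifferentiableOn ℂ φ (ball 0 1) := han.differentiableOn
  have hconj : (starRingEnd ℂ) (φ 0) * φ 0 = (Complex.normSq (φ 0) : ℂ) := by
    rw [mul_comm, Complex.mul_conj]
  have hns : Complex.normSq (φ 0) < 1 := by
    rw [← Complex.sq_norm]; nlinarith [norm_nonneg (φ 0)]
  have hne : (1 : ℂ) - (Complex.normSq (φ 0) : ℂ) ≠ 0 := by
    intro h
    have : ((1 - Complex.normSq (φ 0) : ℝ) : ℂ) = 0 := by push_cast; linear_combination h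
    rw [Complex.ofReal_eq_zero] at this
    linarith
  have heq : deriv (mob φ) =ᶠ[nhds 0] (fun z =>
      (1 - (Complex.normSq (φ 0) : ℂ)) * deriv φ z / (1 - (starRingEnd ℂ) (φ 0) * φ z)^2) := by
    filter_upwards [isOpen_ball.mem_nhds h0m] with z hz
    exact mob_deriv hd hb hlt hz
  rw [heq.deriv_eq]
  have hφ0 : HasDerivAt φ (deriv φ 0) 0 :=
    (hd.differentiableAt (isOpen_ball.mem_nhds h0m)).hasDerivAt
  have hφ' : HasDerivAt (deriv φ) (deriv (deriv φ) 0) 0 :=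
    (((han.deriv) 0 h0m).differentiableAt).hasDerivAt
  have hnum : HasDerivAt (fun z => (1 - (Complex.normSq (φ 0) : ℂ)) * deriv φ z)
      ((1 - (Complex.normSq (φ 0) : ℂ)) * deriv (deriv φ) 0) 0 := hφ'.const_mul _
  have h2 : HasDerivAt (fun w => 1 - (starRingEnd ℂ) (φ 0) * φ w)
      (-((starRingEnd ℂ) (φ 0) * deriv φ 0)) 0 := by
    simpa using ((hφ0.const_mul ((starRingEnd ℂ) (φ 0))).const_sub 1)
  have hden : HasDerivAt (fun w => (1 - (starRingEnd ℂ) (φ 0) * φ w)^2)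
      (2 * (1 - (starRingEnd ℂ) (φ 0) * φ 0)^1 * (-((starRingEnd ℂ) (φ 0) * deriv φ 0))) 0 := by
    have h2p : HasDerivAt (fun w => (1 - (starRingEnd ℂ) (φ 0) * φ w)^2) _ 0 := h2.pow 2
    simpa using h2p
  have hden0 : (1 : ℂ) - (starRingEnd ℂ) (φ 0) * φ 0 = 1 - (Complex.normSq (φ 0) : ℂ) := by
    rw [mul_comm, Complex.mul_conj]
  have hdenne : ((1 : ℂ) - (starRingEnd ℂ) (φ 0) * φ 0)^2 ≠ 0 := by
    rw [hden0]; exact pow_ne_zero _ hne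
  have h3 : HasDerivAt (fun w => (1 - (Complex.normSq (φ 0) : ℂ)) * deriv φ w / (1 - (starRingEnd ℂ) (φ 0) * φ w)^2) _ 0 :=
    hnum.div hden hdenne
  rw [h3.deriv, hden0]
  field_simp
  ring_nf

lemma schur2 {φ : ℂ → ℂ} (han : AnalyticOnNhd ℂ φ (ball 0 1))
    (hb : ∀ z ∈ ball (0:ℂ) 1, ‖φ z‖ ≤ 1)
    (hlt : ‖φ 0‖ < 1) :
    ‖deriv (deriv φ) 0‖ / 2
      ≤ (1 - ‖φ 0‖^2) - ‖deriv φ 0‖^2 / (1 + ‖φ 0‖) := by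
  have h0m : (0:ℂ) ∈ ball (0:ℂ) 1 := mem_ball_self one_pos
  have hd : DifferentiableOn ℂ φ (ball 0 1) := han.differentiableOn
  set g : ℂ → ℂ := mob φ with hg
  have hgd : DifferentiableOn ℂ g (ball 0 1) := mob_diff hd hb hlt
  have hgan : AnalyticAt ℂ g 0 := hgd.analyticAt (isOpen_ball.mem_nhds h0m)
  obtain ⟨p, hp⟩ := hgan
  have hq := hp.has_fpower_series_dslope_fslope
  set h : ℂ → ℂ := dslope g 0 with hh
  -- differentiability of h
  have hhd : DifferentiableOn ℂ h (ball 0 1) := by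
    intro z hz
    rcases eq_or_ne z 0 with rfl | hz0
    · exact hq.analyticAt.differentiableAt.differentiableWithinAt
    · exact ((differentiableAt_dslope_of_ne hz0).mpr
        (hgd.differentiableAt (isOpen_ball.mem_nhds hz))).differentiableWithinAt
  -- bound on h
  have hhb : ∀ z ∈ ball (0:ℂ) 1, ‖h z‖ ≤ 1 := by
    intro z hz
    by_contra hcon
    push_neg at hcon
    have key : ∀ R : ℝ, 1 < R → ‖h z‖ ≤ R := by
      intro R hR
      have hmaps : Set.MapsTo g (ball 0 1) (ball (g 0) R) := by
        intro w hw
        rw [hg, mob_zero, mem_ball, dist_zero_right]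
        exact lt_of_le_of_lt (mob_bound hb hlt hw) hR
      have := Complex.norm_dslope_le_div_of_mapsTo_ball hgd (hmaps.mono_right ball_subset_closedBall) hz
      rw [div_one] at this; exact this
    have := key ((1 + ‖h z‖)/2) (by linarith)
    linarith
  have hpick := pickB hhd hhb
  -- values of h at 0
  have hh0 : h 0 = deriv g 0 := dslope_same g 0
  have hderh : deriv h 0 = p.coeff 2 := by
    rw [hq.deriv]
    exact FormalMultilinearSeries.coeff_fslope
  obtain ⟨r, hr⟩ := hp
  have hcoeff2 : (2 : ℂ) * p.coeff 2 = deriv (deriv g) 0 := by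
    have h1 : (Nat.factorial 2) • ((p 2) fun _ => (1:ℂ)) = iteratedFDeriv ℂ 2 g 0 (fun _ => 1) :=
      hr.factorial_smul 1 2
    rw [← iteratedDeriv_eq_iteratedFDeriv] at h1
    have h2 : iteratedDeriv 2 g 0 = deriv (deriv g) 0 := by
      rw [show (2:ℕ) = 1+1 from rfl, iteratedDeriv_succ, iteratedDeriv_one]
    rw [← h2, ← h1, nsmul_eq_mul]
    norm_num
  -- abbreviations
  set x := ‖φ 0‖ with hx
  set D := ‖deriv φ 0‖ with hD
  set E := ‖deriv (deriv φ) 0‖ with hE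
  have hx0 : 0 ≤ x := norm_nonneg _
  have hD0 : 0 ≤ D := norm_nonneg _
  have hE0 : 0 ≤ E := norm_nonneg _
  have hns : Complex.normSq (φ 0) = x^2 := (Complex.sq_norm (φ 0)).symm
  have hnslt : Complex.normSq (φ 0) < 1 := by rw [hns]; nlinarith
  have hpos : (0:ℝ) < 1 - Complex.normSq (φ 0) := by linarith
  have hne : (1 : ℂ) - (Complex.normSq (φ 0) : ℂ) ≠ 0 := by
    intro hcon
    have : ((1 - Complex.normSq (φ 0) : ℝ) : ℂ) = 0 := by push_cast; linear_combination hcon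
    rw [Complex.ofReal_eq_zero] at this
    linarith
  have hcast : ((1:ℂ) - (Complex.normSq (φ 0) : ℂ)) = ((1 - Complex.normSq (φ 0) : ℝ) : ℂ) := by
    push_cast; ring
  -- value of h at 0
  have hden0 : (1 : ℂ) - (starRingEnd ℂ) (φ 0) * φ 0 = 1 - (Complex.normSq (φ 0) : ℂ) := by
    rw [mul_comm, Complex.mul_conj]
  have hder := mob_deriv hd hb hlt h0m
  rw [hden0] at hder
  have habs0 : ‖h 0‖ = D / (1 - Complex.normSq (φ 0)) := by
    rw [hh0, hder, hcast]
    simp only [norm_div, norm_mul, norm_pow, Complex.norm_real, Real.norm_eq_abs]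
    rw [abs_of_pos hpos]
    field_simp
    ring
  -- value of deriv h at 0
  set Nc : ℂ := (1 - (Complex.normSq (φ 0) : ℂ)) * deriv (deriv φ) 0
      + 2 * (starRingEnd ℂ) (φ 0) * (deriv φ 0)^2 with hNc
  have hgg := mob_deriv2 han hb hlt
  have habs1 : ‖deriv h 0‖
      = ‖Nc‖ / (2 * (1 - Complex.normSq (φ 0))^2) := by
    have hdh : deriv h 0 = Nc / (2 * (1 - (Complex.normSq (φ 0) : ℂ))^2) := by
      rw [hderh]
      have : p.coeff 2 = deriv (deriv g) 0 / 2 := by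
        field_simp at hcoeff2 ⊢
        linear_combination hcoeff2
      rw [this, hgg, ← hNc, div_div, mul_comm]
    rw [hdh, norm_div, norm_mul, norm_pow, hcast, Complex.norm_real, Real.norm_eq_abs, abs_of_pos hpos]
    norm_num
  -- triangle inequality
  have htri : E * (1 - Complex.normSq (φ 0)) ≤ ‖Nc‖ + 2 * x * D^2 := by
    have hsplit : (1 - (Complex.normSq (φ 0) : ℂ)) * deriv (deriv φ) 0
        = Nc - 2 * (starRingEnd ℂ) (φ 0) * (deriv φ 0)^2 := by rw [hNc]; ring
    have h5 : ‖(1 - (Complex.normSq (φ 0) : ℂ)) * deriv (deriv φ) 0‖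
        = E * (1 - Complex.normSq (φ 0)) := by
      rw [norm_mul, hcast, Complex.norm_real, Real.norm_eq_abs, abs_of_pos hpos]; ring
    have h6 := norm_sub_le Nc (2 * (starRingEnd ℂ) (φ 0) * (deriv φ 0)^2)
    rw [← hsplit, h5] at h6
    have h7 : ‖2 * (starRingEnd ℂ) (φ 0) * (deriv φ 0)^2‖ = 2 * x * D^2 := by
      simp [norm_mul, norm_pow, Complex.norm_conj, hx, hD]
    rw [h7] at h6
    exact h6
  -- Schwarz-Pick for h
  rw [habs0, habs1] at hpick
  have hsq : (D / (1 - Complex.normSq (φ 0)))^2 = D^2 / (1 - Complex.normSq (φ 0))^2 := by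
    rw [div_pow]
  rw [hsq] at hpick
  have hNle : ‖Nc‖ ≤ 2 * (1 - Complex.normSq (φ 0))^2 - 2 * D^2 := by
    have h8 := mul_le_mul_of_nonneg_right hpick (by positivity : (0:ℝ) ≤ 2 * (1 - Complex.normSq (φ 0))^2)
    rw [div_mul_cancel₀ _ (by positivity : (2 * (1 - Complex.normSq (φ 0))^2) ≠ 0)] at h8
    have h9 : (1 - D^2 / (1 - Complex.normSq (φ 0))^2) * (2 * (1 - Complex.normSq (φ 0))^2)
        = 2 * (1 - Complex.normSq (φ 0))^2 - 2 * D^2 := by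
      field_simp
    linarith [h8, h9.le, h9.ge]
  -- final arithmetic
  have key : E * (1 - x^2) ≤ 2 * (1 - x^2)^2 - 2 * D^2 + 2 * x * D^2 := by
    rw [← hns]; nlinarith [htri, hNle]
  have h1px : (0:ℝ) < 1 + x := by linarith
  have h1mx2 : (0:ℝ) < 1 - x^2 := by rw [← hns]; exact hpos
  have hqq : D^2/(1+x) * (1+x) = D^2 := div_mul_cancel₀ _ (ne_of_gt h1px)
  nlinarith [key, hqq, h1px, h1mx2, mul_pos h1px h1mx2, div_nonneg (sq_nonneg D) h1px.le]

lemma series_coeffs {ω : ℂ → ℂ} {c : ℕ → ℂ}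
    (hc : ∀ z ∈ ball (0:ℂ) 1, HasSum (fun n : ℕ => c (n + 1) * z ^ (n + 1)) (ω z)) :
    ∀ n : ℕ, 0 < n → (Nat.factorial n : ℂ) * c n = iteratedDeriv n ω 0 := by
  set c' : ℕ → ℂ := fun n => if n = 0 then 0 else c n with hc'
  set p : FormalMultilinearSeries ℂ ℂ ℂ := FormalMultilinearSeries.ofScalars ℂ c' with hp
  have hsum : ∀ z ∈ ball (0:ℂ) 1, HasSum (fun n => c' n * z ^ n) (ω z) := by
    intro z hz
    have h1 := hc z hz
    have h2 : HasSum (fun n : ℕ => c' (n + 1) * z ^ (n + 1))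
        (ω z - ∑ i ∈ Finset.range 1, c' i * z ^ i) := by
      simp only [Finset.range_one, Finset.sum_singleton, hc']
      simpa using h1
    exact (hasSum_nat_add_iff' 1).mp h2
  have hps : HasFPowerSeriesOnBall ω p 0 1 := by
    refine ⟨?_, one_pos, ?_⟩
    · apply ENNReal.le_of_forall_nnreal_lt
      intro r hr
      have hr1 : (r : ℝ) < 1 := by exact_mod_cast hr
      have hz : ((r : ℝ) : ℂ) ∈ ball (0:ℂ) 1 := by
        simp [_root_.abs_of_nonneg r.coe_nonneg, hr1]
      have h3 := (hsum _ hz).summable.tendsto_atTop_zero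
      have h4 : Filter.Tendsto (fun n => ‖p n‖ * (r:ℝ)^n) Filter.atTop (nhds 0) := by
        have h5 := h3.norm
        simp only [norm_zero] at h5
        convert h5 using 2 with n
        rw [FormalMultilinearSeries.ofScalars_norm, norm_mul, norm_pow]
        simp [Complex.norm_real, _root_.abs_of_nonneg r.coe_nonneg]
      exact p.le_radius_of_tendsto h4
    · intro y hy
      have hy' : y ∈ ball (0:ℂ) 1 := by
        rw [mem_emetric_ball_zero_iff] at hy
        rw [mem_ball_zero_iff]
        rw [← ofReal_norm_eq_enorm, ENNReal.ofReal_lt_one] at hy; exact hy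
      have := hsum y hy'
      rw [zero_add]
      convert this using 2 with n
      · rfl
      rw [FormalMultilinearSeries.ofScalars_apply_eq]
      simp [smul_eq_mul, mul_comm]
  intro n hn
  have h6 := hps.factorial_smul (1:ℂ) n
  rw [← iteratedDeriv_eq_iteratedFDeriv] at h6
  rw [← h6, nsmul_eq_mul]
  congr 1
  have : (p n) (fun _ => (1:ℂ)) = c' n := by
    rw [FormalMultilinearSeries.ofScalars_apply_eq]
    simp
  rw [this, hc']
  simp [Nat.pos_iff_ne_zero.mp hn]

theorem stmt_15 (ω : ℂ → ℂ) (c : ℕ → ℂ) (μ : ℂ)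
    (hd : DifferentiableOn ℂ ω (ball 0 1))
    (h0 : ω 0 = 0)
    (hb : ∀ z ∈ ball (0:ℂ) 1, ‖deriv ω z‖ ≤ 1)
    (hc : ∀ z ∈ ball (0:ℂ) 1, HasSum (fun n : ℕ => c (n + 1) * z ^ (n + 1)) (ω z))
    (h1 : (4/3) * ‖c 1‖ / (1 + ‖c 1‖) ≤ ‖μ‖) :
    ‖c 1 * c 3 - μ * c 2^2‖ ≤ (1/12) * (3 * ‖μ‖ + 2 * (2 - 3 * ‖μ‖) * ‖c 1‖^2 - (4 - 3 * ‖μ‖) * ‖c 1‖^4) := by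
  have h0m : (0:ℂ) ∈ ball (0:ℂ) 1 := mem_ball_self one_pos
  set φ : ℂ → ℂ := deriv ω with hφ
  have hωan : AnalyticOnNhd ℂ ω (ball 0 1) := hd.analyticOnNhd isOpen_ball
  have hφan : AnalyticOnNhd ℂ φ (ball 0 1) := hωan.deriv
  have hφd : DifferentiableOn ℂ φ (ball 0 1) := hφan.differentiableOn
  have hcoeffs := series_coeffs hc
  have hc1 : c 1 = φ 0 := by
    have := hcoeffs 1 one_pos
    rw [iteratedDeriv_one] at this
    simpa using this
  have hc2 : 2 * c 2 = deriv φ 0 := by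
    have := hcoeffs 2 two_pos
    rw [show (2:ℕ) = 1+1 from rfl, iteratedDeriv_succ, iteratedDeriv_one] at this
    simpa [Nat.factorial] using this
  have hc3 : 6 * c 3 = deriv (deriv φ) 0 := by
    have := hcoeffs 3 three_pos
    rw [show (3:ℕ) = 1+1+1 from rfl, iteratedDeriv_succ, iteratedDeriv_succ,
      iteratedDeriv_one] at this
    have h6 : ((Nat.factorial 3 : ℕ) : ℂ) = 6 := by norm_num [Nat.factorial]
    rw [h6] at this
    exact this
  set x := ‖c 1‖ with hx
  set m := ‖μ‖ with hm
  set y := ‖c 2‖ with hy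
  set w := ‖c 3‖ with hw
  have hx0 : 0 ≤ x := norm_nonneg _
  have hy0 : 0 ≤ y := norm_nonneg _
  have hw0 : 0 ≤ w := norm_nonneg _
  have hm0 : 0 ≤ m := norm_nonneg _
  have hx1 : x ≤ 1 := by rw [hx, hc1]; exact hb 0 h0m
  have h1px : (0:ℝ) < 1 + x := by linarith
  -- condition C
  have hC : 4 * x ≤ 3 * m * (1 + x) := by
    rw [div_le_iff₀ h1px] at h1
    nlinarith [h1]
  rcases eq_or_lt_of_le hx1 with heq | hlt
  · -- |c 1| = 1 : φ constant
    have heq' : ‖φ 0‖ = 1 := by rw [← hc1]; exact heq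
    have hconst := const_of_max hφd hb heq'
    have hdz := deriv_zero_of_const hconst
    have hc2' : c 2 = 0 := by
      have := hdz 0 h0m
      rw [← hc2] at this
      linear_combination this / 2
    have hc3' : c 3 = 0 := by
      have hev : deriv φ =ᶠ[nhds 0] (fun _ => (0:ℂ)) :=
        Filter.eventuallyEq_of_mem (isOpen_ball.mem_nhds h0m) hdz
      have : deriv (deriv φ) 0 = 0 := by rw [hev.deriv_eq]; exact deriv_const 0 0
      rw [← hc3] at this
      linear_combination this / 6
    rw [hc2', hc3', heq]
    norm_num
    linarith
  · -- |c 1| < 1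
    have hlt' : ‖φ 0‖ < 1 := by rw [← hc1]; exact hlt
    have hpick := pickB hφd hb
    have hA : 2 * y ≤ 1 - x^2 := by
      have habs2 : ‖deriv φ 0‖ = 2 * y := by
        rw [← hc2, norm_mul, hy]
        norm_num
      rw [habs2, ← hc1] at hpick
      exact hpick
    have hs2 := schur2 hφan hb hlt'
    have hB : 3 * w ≤ (1 - x^2) - (4 * y^2) / (1 + x) := by
      have habs3 : ‖deriv (deriv φ) 0‖ = 6 * w := by
        rw [← hc3, norm_mul, hw]
        norm_num
      have habs2 : ‖deriv φ 0‖ = 2 * y := by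
        rw [← hc2, norm_mul, hy]
        norm_num
      rw [habs3, habs2, ← hc1] at hs2
      have : (2*y)^2 = 4*y^2 := by ring
      rw [this] at hs2
      linarith [hs2]
    -- bound LHS
    have hLHS : ‖c 1 * c 3 - μ * c 2^2‖ ≤ x * w + m * y^2 := by
      calc ‖c 1 * c 3 - μ * c 2^2‖
          ≤ ‖c 1 * c 3‖ + ‖μ * c 2^2‖ := by
            have := norm_sub_le (c 1 * c 3) (μ * c 2^2)
            simpa using this
        _ = x * w + m * y^2 := by rw [norm_mul, norm_mul, norm_pow]
    -- final arithmetic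
    have hB' : 3 * w * (1 + x) ≤ (1 - x^2) * (1 + x) - 4 * y^2 := by
      have := mul_le_mul_of_nonneg_right hB h1px.le
      rw [sub_mul, div_mul_cancel₀ _ (ne_of_gt h1px)] at this
      linarith
    have hI : (0:ℝ) ≤ ((1 - x^2) * (1 + x) - 4 * y^2 - 3 * w * (1 + x)) * (4 * x) :=
      mul_nonneg (by linarith) (by linarith)
    have hII : (0:ℝ) ≤ (3 * m * (1 + x) - 4 * x) * ((1 - x^2)^2 - 4 * y^2) := by
      apply mul_nonneg (by linarith)
      nlinarith [hA, hy0]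
    have hT : 12 * (1 + x) * ((1/12) * (3 * m + 2 * (2 - 3 * m) * x^2 - (4 - 3 * m) * x^4)
        - (x * w + m * y^2))
        = ((1 - x^2) * (1 + x) - 4 * y^2 - 3 * w * (1 + x)) * (4 * x)
          + (3 * m * (1 + x) - 4 * x) * ((1 - x^2)^2 - 4 * y^2) := by ring
    have hG : (0:ℝ) ≤ 12 * (1 + x) * ((1/12) * (3 * m + 2 * (2 - 3 * m) * x^2 - (4 - 3 * m) * x^4)
        - (x * w + m * y^2)) := by
      rw [hT]; exact add_nonneg hI hII
    have h12 : (0:ℝ) < 12 * (1 + x) := by linarith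
    have hG2 : (0:ℝ) ≤ (1/12) * (3 * m + 2 * (2 - 3 * m) * x^2 - (4 - 3 * m) * x^4)
        - (x * w + m * y^2) := nonneg_of_mul_nonneg_right hG h12
    linarith [hLHS, hG2]
end

section
/- Fix t with 0 ≤ t ≤ 1 and define ω(z) = ∫₀^z (t + w³)/(1 + tw³) dw for z ∈ 𝔻. Then ω ∈ 𝓑'₀, its power series coefficients satisfy c₁ = t, c₂ = c₃ = 0, c₄ = (1/4)(1 − t²), and equality |c₄ − c₂²| = (1/4)·(1 − t²) holds, so the bound |c₄ − c₂²| ≤ (1/4)(1 − |c₁|²) is sharp. -/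
open Complex Metric

noncomputable def cco (t : ℝ) (n : ℕ) : ℂ :=
  if n = 1 then (t : ℂ)
  else if n % 3 = 1 then ((1 : ℂ) - (t : ℂ)^2) * (-(t : ℂ))^((n - 4)/3) / (n : ℂ) else 0

lemma cco_one (t : ℝ) : cco t 1 = (t : ℂ) := by simp [cco]

lemma cco_34 (t : ℝ) (k : ℕ) :
    cco t (3*k+4) = ((1 : ℂ) - (t : ℂ)^2) * (-(t : ℂ))^k / ((3*k+4 : ℕ) : ℂ) := by
  rw [cco, if_neg (by omega), if_pos (by omega)]
  congr 3
  omega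

lemma cco_succ_vanish (t : ℝ) (n : ℕ) (h : n % 3 ≠ 0) : cco t (n+1) = 0 := by
  rw [cco, if_neg (by omega), if_neg (by omega)]

lemma abs_cco34 (t : ℝ) (ht0 : 0 ≤ t) (ht1 : t ≤ 1) (k : ℕ) :
    ‖cco t (3*k+4)‖ = (1 - t^2) * t^k / (3*k+4 : ℝ) := by
  rw [cco_34, norm_div, norm_mul, norm_pow]
  have h1 : ((1 : ℂ) - (t : ℂ)^2) = ((1 - t^2 : ℝ) : ℂ) := by push_cast; ring
  have h2 : (-(t : ℂ)) = ((-t : ℝ) : ℂ) := by push_cast; ring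
  rw [h1, h2, Complex.norm_real, Real.norm_eq_abs, Complex.norm_real, Real.norm_eq_abs, Complex.norm_natCast,
    _root_.abs_of_nonneg (by nlinarith : (0:ℝ) ≤ 1 - t^2), abs_neg, _root_.abs_of_nonneg ht0]
  push_cast; ring

lemma aux_abs_tw (t : ℝ) (ht0 : 0 ≤ t) (ht1 : t ≤ 1) {w : ℂ} (hw : ‖w‖ < 1) :
    ‖(t : ℂ) * w‖ < 1 := by
  rw [norm_mul, Complex.norm_real, Real.norm_eq_abs, _root_.abs_of_nonneg ht0]
  nlinarith [norm_nonneg w]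

lemma aux_ne (t : ℝ) (ht0 : 0 ≤ t) (ht1 : t ≤ 1) {w : ℂ} (hw : ‖w‖ < 1) :
    1 + (t : ℂ) * w ≠ 0 := by
  intro h
  have h2 : (t : ℂ) * w = -1 := by linear_combination h
  have := aux_abs_tw t ht0 ht1 hw
  rw [h2] at this
  simp at this

lemma geom (t : ℝ) (ht0 : 0 ≤ t) (ht1 : t ≤ 1) {w : ℂ} (hw : ‖w‖ < 1) :
    HasSum (fun k : ℕ => (-((t : ℂ) * w))^k) (1 + (t : ℂ) * w)⁻¹ := by
  have h := hasSum_geometric_of_norm_lt_one (ξ := -((t : ℂ) * w))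
    (by rw [norm_neg]; exact aux_abs_tw t ht0 ht1 hw)
  rw [show (1 + (t : ℂ) * w) = 1 - -((t : ℂ) * w) from by ring]
  exact h

lemma mul3_inj : Function.Injective (fun k : ℕ => 3 * k) := fun a b h => by
  simpa using h

lemma not_range3 {n : ℕ} (h : n ∉ Set.range (fun k : ℕ => 3 * k)) : n % 3 ≠ 0 := by
  intro hc
  exact h ⟨n / 3, by show 3 * (n / 3) = n; omega⟩

noncomputable def Fcc (t : ℝ) (z : ℂ) : ℕ → C(ℝ, ℂ)
  | 0 => ContinuousMap.const ℝ ((t : ℂ) * z)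
  | (k+1) => ⟨fun s : ℝ => ((1:ℂ) - (t:ℂ)^2) * (-(t:ℂ))^k * (((s:ℝ):ℂ) * z)^(3*k+3) * z,
      by fun_prop⟩

@[simp] lemma Fcc_zero_apply (t : ℝ) (z : ℂ) (s : ℝ) : Fcc t z 0 s = (t:ℂ)*z := rfl
@[simp] lemma Fcc_succ_apply (t : ℝ) (z : ℂ) (k : ℕ) (s : ℝ) :
    Fcc t z (k+1) s = ((1:ℂ) - (t:ℂ)^2) * (-(t:ℂ))^k * (((s:ℝ):ℂ) * z)^(3*k+3) * z := rfl

lemma Fcc_restrict_norm_le (t : ℝ) (z : ℂ) (n : ℕ) {C : ℝ} (hC : 0 ≤ C)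
    (H : ∀ s : ℝ, s ∈ Set.uIcc (0:ℝ) 1 → ‖Fcc t z n s‖ ≤ C) :
    ‖(Fcc t z n).restrict (⟨Set.uIcc 0 1, isCompact_uIcc⟩ : TopologicalSpace.Compacts ℝ)‖
      ≤ C := by
  apply (ContinuousMap.norm_le _ hC).2
  rintro ⟨s, hs⟩
  simp only [ContinuousMap.restrict_apply]
  exact H s hs

lemma key (t : ℝ) (ht0 : 0 ≤ t) (ht1 : t ≤ 1) {z : ℂ} (hz : ‖z‖ < 1) :
    HasSum (fun n : ℕ => cco t (n+1) * z^(n+1))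
      (∫ s in (0:ℝ)..1, (((t : ℂ) + ((s : ℂ) * z)^3) / (1 + (t : ℂ) * ((s : ℂ) * z)^3)) * z) := by
  have haz := norm_nonneg z
  -- norm bound for the continuous maps
  have hbound : ∀ n : ℕ,
      ‖(Fcc t z n).restrict (⟨Set.uIcc 0 1, isCompact_uIcc⟩ : TopologicalSpace.Compacts ℝ)‖
        ≤ (‖z‖)^n := by
    intro n
    apply Fcc_restrict_norm_le t z n (pow_nonneg haz n)
    intro s hs
    obtain ⟨hs0, hs1⟩ : (0:ℝ) ≤ s ∧ s ≤ 1 := by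
      simpa [Set.uIcc_of_le zero_le_one] using hs
    cases n with
    | zero =>
      rw [Fcc_zero_apply, pow_zero, norm_mul, Complex.norm_real, Real.norm_eq_abs,
        _root_.abs_of_nonneg ht0]
      nlinarith
    | succ k =>
      rw [Fcc_succ_apply]
      have h1 : ‖(1:ℂ) - (t:ℂ)^2‖ ≤ 1 := by
        rw [show ((1:ℂ) - (t:ℂ)^2) = ((1 - t^2 : ℝ) : ℂ) from by push_cast; ring,
          Complex.norm_real, Real.norm_eq_abs, _root_.abs_of_nonneg (by nlinarith)]
        nlinarith
      have h2 : ‖-(t:ℂ)‖ ≤ 1 := by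
        rw [norm_neg, Complex.norm_real, Real.norm_eq_abs, _root_.abs_of_nonneg ht0]; exact ht1
      have h3 : ‖((s:ℝ):ℂ) * z‖ ≤ ‖z‖ := by
        rw [norm_mul, Complex.norm_real, Real.norm_eq_abs, _root_.abs_of_nonneg hs0]
        nlinarith
      calc ‖((1:ℂ) - (t:ℂ)^2) * (-(t:ℂ))^k * (((s:ℝ):ℂ) * z)^(3*k+3) * z‖
          = ‖(1:ℂ) - (t:ℂ)^2‖ * (‖-(t:ℂ)‖)^k
            * (‖((s:ℝ):ℂ) * z‖)^(3*k+3) * ‖z‖ := by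
            simp [norm_mul, norm_pow]
        _ ≤ 1 * 1^k * (‖z‖)^(3*k+3) * ‖z‖ := by gcongr
        _ = (‖z‖)^(3*k+4) := by ring
        _ ≤ (‖z‖)^(k+1) := pow_le_pow_of_le_one haz hz.le (by omega)
  have hsum_norm : Summable (fun n : ℕ =>
      ‖(Fcc t z n).restrict (⟨Set.uIcc 0 1, isCompact_uIcc⟩ : TopologicalSpace.Compacts ℝ)‖) :=
    Summable.of_nonneg_of_le (fun n => norm_nonneg _) hbound
      (summable_geometric_of_lt_one haz hz)
  have hswap := intervalIntegral.hasSum_intervalIntegral_of_summable_norm (a := (0:ℝ)) (b := 1) hsum_norm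
  -- identify the integrand with the tsum
  have hcong : (∫ s in (0:ℝ)..1, ∑' n : ℕ, Fcc t z n s)
      = ∫ s in (0:ℝ)..1, (((t : ℂ) + ((s : ℂ) * z)^3) / (1 + (t : ℂ) * ((s : ℂ) * z)^3)) * z := by
    apply intervalIntegral.integral_congr
    intro s hs
    rw [Set.uIcc_of_le (zero_le_one)] at hs
    obtain ⟨hs0, hs1⟩ := hs
    set w : ℂ := (((s:ℝ):ℂ) * z)^3 with hwdef
    have hw : ‖w‖ < 1 := by
      rw [hwdef, norm_pow, norm_mul, Complex.norm_real, Real.norm_eq_abs, _root_.abs_of_nonneg hs0]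
      have : s * ‖z‖ < 1 := by nlinarith
      exact pow_lt_one₀ (by positivity) this (by norm_num)
    have hne := aux_ne t ht0 ht1 hw
    have htail : HasSum (fun k : ℕ => Fcc t z (k+1) s)
        ((((1:ℂ) - (t:ℂ)^2) * w * z) * (1 + (t:ℂ) * w)⁻¹) := by
      apply HasSum.congr_fun (((geom t ht0 ht1 hw).mul_left (((1:ℂ) - (t:ℂ)^2) * w * z)))
      intro k
      show ((1:ℂ) - (t:ℂ)^2) * (-(t:ℂ))^k * (((s:ℝ):ℂ) * z)^(3*k+3) * z = _
      rw [show (3*k+3 : ℕ) = 3*(k+1) from by ring, pow_mul, ← hwdef,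
        show (-((t:ℂ)*w))^k = (-(t:ℂ))^k * w^k from by rw [neg_mul_eq_neg_mul, mul_pow]]
      ring
    have hfull := (hasSum_nat_add_iff (f := fun n => Fcc t z n s) 1).mp htail
    rw [Finset.range_one, Finset.sum_singleton, Fcc_zero_apply] at hfull
    show (∑' (n : ℕ), (Fcc t z n) s) = ((t:ℂ) + (((s:ℝ):ℂ)*z)^3)/(1 + (t:ℂ)*(((s:ℝ):ℂ)*z)^3) * z
    rw [hfull.tsum_eq, ← hwdef]
    field_simp
    ring
  rw [hcong] at hswap
  rw [← Function.Injective.hasSum_iff mul3_inj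
    (fun n hn => by simp [cco_succ_vanish t n (not_range3 hn)])]
  apply hswap.congr_fun
  intro n
  cases n with
  | zero =>
    show cco t (3*0+1) * z^(3*0+1) = _
    simp [cco_one]
  | succ k =>
    show cco t (3*(k+1)+1) * z^(3*(k+1)+1) = ∫ s in (0:ℝ)..1, Fcc t z (k+1) s
    have e1 : (3*(k+1)+1 : ℕ) = 3*k+4 := by ring
    rw [e1, cco_34]
    have e2 : ∀ s : ℝ, Fcc t z (k+1) s
        = (((1:ℂ)-(t:ℂ)^2) * (-(t:ℂ))^k * z^(3*k+3) * z) * (((s^(3*k+3) : ℝ)):ℂ) := by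
      intro s
      rw [Fcc_succ_apply, mul_pow]
      push_cast
      ring
    simp only [e2]
    rw [intervalIntegral.integral_const_mul, intervalIntegral.integral_ofReal,
      integral_pow]
    have hne4 : ((3*k+4 : ℕ) : ℂ) ≠ 0 := Nat.cast_ne_zero.mpr (by omega)
    norm_num
    push_cast
    ring


lemma hasSum_deriv (t : ℝ) (ht0 : 0 ≤ t) (ht1 : t ≤ 1) {z : ℂ} (hz : ‖z‖ < 1) :
    HasSum (fun n : ℕ => ((n : ℂ) + 1) * cco t (n+1) * z^n)
      (((t : ℂ) + z^3) / (1 + (t : ℂ) * z^3)) := by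
  have hw : ‖z^3‖ < 1 := by
    rw [norm_pow]; exact pow_lt_one₀ (norm_nonneg z) hz (by norm_num)
  have hne : 1 + (t : ℂ) * z^3 ≠ 0 := aux_ne t ht0 ht1 hw
  set f := fun n : ℕ => ((n : ℂ) + 1) * cco t (n+1) * z^n with hf
  have hvan : ∀ n, n ∉ Set.range (fun k : ℕ => 3 * k) → f n = 0 := by
    intro n hn
    rw [hf]
    simp [cco_succ_vanish t n (not_range3 hn)]
  rw [← Function.Injective.hasSum_iff mul3_inj hvan]
  have hg : HasSum (fun k : ℕ => (((1:ℂ) - (t:ℂ)^2) * z^3) * (-((t:ℂ) * z^3))^k)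
      ((((1:ℂ) - (t:ℂ)^2) * z^3) * (1 + (t:ℂ) * z^3)⁻¹) := (geom t ht0 ht1 hw).mul_left _
  have h1 : HasSum (fun k : ℕ => (f ∘ fun k => 3 * k) (k + 1))
      ((((1:ℂ) - (t:ℂ)^2) * z^3) * (1 + (t:ℂ) * z^3)⁻¹) := by
    apply hg.congr_fun
    intro k
    have h34 : (3 * (k+1) : ℕ) = 3*k + 3 := by ring
    simp only [Function.comp_apply, hf, h34]
    rw [show (3*k+3+1 : ℕ) = 3*k+4 from by omega, cco_34]
    have hne4 : ((3*k+4 : ℕ) : ℂ) ≠ 0 := Nat.cast_ne_zero.mpr (by omega)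
    have hc : ((3*k+3 : ℕ) : ℂ) + 1 = ((3*k+4 : ℕ) : ℂ) := by push_cast; ring
    rw [hc, mul_comm (((3*k+4 : ℕ) : ℂ)), div_mul_cancel₀ _ hne4]
    rw [show (-((t:ℂ) * z^3))^k = (-(t:ℂ))^k * (z^3)^k from by rw [neg_mul_eq_neg_mul, mul_pow]]
    rw [← pow_mul]
    ring
  have h2 := (hasSum_nat_add_iff (f := f ∘ fun k => 3 * k) 1).mp h1
  have h3 : (f ∘ fun k => 3 * k) 0 = (t : ℂ) := by
    simp [hf, cco_one]
  rw [Finset.range_one, Finset.sum_singleton, h3] at h2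
  have e : ((t : ℂ) + z^3) / (1 + (t : ℂ) * z^3)
      = ((1:ℂ) - (t:ℂ)^2) * z^3 * (1 + (t:ℂ) * z^3)⁻¹ + t := by
    field_simp
    ring
  rw [e]
  exact h2

lemma summable_u (t : ℝ) (ht0 : 0 ≤ t) (ht1 : t ≤ 1) :
    Summable (fun n : ℕ => ((n : ℝ) + 1) * ‖cco t (n+1)‖) := by
  set u := fun n : ℕ => ((n : ℝ) + 1) * ‖cco t (n+1)‖ with hu
  have hvan : ∀ n, n ∉ Set.range (fun k : ℕ => 3 * k) → u n = 0 := by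
    intro n hn
    rw [hu]
    simp [cco_succ_vanish t n (not_range3 hn)]
  rw [← Function.Injective.summable_iff mul3_inj hvan]
  rw [← summable_nat_add_iff 1]
  have heq : ∀ k : ℕ, (u ∘ fun k => 3 * k) (k + 1) = (1 - t^2) * t^k := by
    intro k
    have h34 : (3 * (k+1) : ℕ) = 3*k + 3 := by ring
    simp only [Function.comp_apply, hu, h34]
    rw [show (3*k+3+1 : ℕ) = 3*k+4 from by omega, abs_cco34 t ht0 ht1 k]
    have : ((3*k+3 : ℕ) : ℝ) + 1 = (3*k+4 : ℝ) := by push_cast; ring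
    rw [this]
    field_simp
  have hsum : Summable (fun k : ℕ => (1 - t^2) * t^k) := by
    by_cases h : t = 1
    · subst h; simpa using summable_zero
    · exact (summable_geometric_of_lt_one ht0 (lt_of_le_of_ne ht1 h)).mul_left _
  exact hsum.congr (fun k => (heq k).symm)

lemma omega_hasDerivAt (t : ℝ) (ht0 : 0 ≤ t) (ht1 : t ≤ 1) {z₀ : ℂ}
    (hz₀ : z₀ ∈ ball (0:ℂ) 1) :
    HasDerivAt (fun z : ℂ =>
        ∫ s in (0:ℝ)..1, (((t : ℂ) + ((s : ℂ) * z)^3) / (1 + (t : ℂ) * ((s : ℂ) * z)^3)) * z)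
      (((t : ℂ) + z₀^3) / (1 + (t : ℂ) * z₀^3)) z₀ := by
  apply hasDerivAt_of_tendstoLocallyUniformlyOn (l := Filter.atTop) (s := ball (0:ℂ) 1) isOpen_ball
    (f := fun N : ℕ => fun z : ℂ => ∑ n ∈ Finset.range N, cco t (n+1) * z^(n+1))
    (f' := fun N : ℕ => fun z : ℂ => ∑ n ∈ Finset.range N, ((n : ℂ) + 1) * cco t (n+1) * z^n)
    (g' := fun z : ℂ => ((t : ℂ) + z^3) / (1 + (t : ℂ) * z^3))
  · -- locally uniform convergence of derivatives
    apply TendstoUniformlyOn.tendstoLocallyUniformlyOn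
    apply TendstoUniformlyOn.congr_right
      (tendstoUniformlyOn_tsum_nat (summable_u t ht0 ht1) ?_)
    · intro z hz
      have hz' : ‖z‖ < 1 := by
        rw [mem_ball_zero_iff] at hz; exact hz
      exact (hasSum_deriv t ht0 ht1 hz').tsum_eq
    · intro n x hx
      have hx' : ‖x‖ < 1 := by
        rw [mem_ball_zero_iff] at hx; exact hx
      have h1 : ‖((n : ℂ) + 1) * cco t (n+1) * x^n‖
          = ((n : ℝ) + 1) * ‖cco t (n+1)‖ * (‖x‖)^n := by
        rw [norm_mul, norm_mul, norm_pow]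
        congr 2
        rw [show ((n : ℂ) + 1) = (((n+1 : ℕ)) : ℂ) from by push_cast; ring,
          Complex.norm_natCast]
        push_cast
        ring
      rw [h1]
      have h2 : (‖x‖)^n ≤ 1 :=
        pow_le_one₀ (norm_nonneg x) hx'.le
      nlinarith [norm_nonneg (cco t (n+1)), Nat.cast_nonneg (α := ℝ) n,
        mul_nonneg (by positivity : (0:ℝ) ≤ ((n:ℝ)+1)) (norm_nonneg (cco t (n+1)))]
  · -- each partial sum differentiable
    apply Filter.Eventually.of_forall
    intro N x hx
    apply HasDerivAt.fun_sum
    intro n _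
    have h := (hasDerivAt_pow (n+1) x).const_mul (cco t (n+1))
    refine h.congr_deriv ?_
    push_cast [Nat.add_sub_cancel]
    ring
  · -- pointwise convergence
    intro x hx
    have hx' : ‖x‖ < 1 := by
      rw [mem_ball_zero_iff] at hx; exact hx
    exact (key t ht0 ht1 hx').tendsto_sum_nat
  · exact hz₀

lemma absG_le (t : ℝ) (ht0 : 0 ≤ t) (ht1 : t ≤ 1) {z : ℂ} (hz : ‖z‖ < 1) :
    ‖((t : ℂ) + z^3) / (1 + (t : ℂ) * z^3)‖ ≤ 1 := by
  set w : ℂ := z^3 with hwdef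
  have hw : ‖w‖ < 1 := by
    rw [hwdef, norm_pow]; exact pow_lt_one₀ (norm_nonneg z) hz (by norm_num)
  rw [norm_div]
  apply div_le_one_of_le₀
  · -- abs (t + w) ≤ abs (1 + t w)
    have hA : (‖(t:ℂ) + w‖)^2 = (t + w.re)^2 + w.im^2 := by
      rw [Complex.sq_norm, Complex.normSq_apply]
      simp
      ring
    have hB : (‖1 + (t:ℂ) * w‖)^2 = (1 + t * w.re)^2 + (t * w.im)^2 := by
      rw [Complex.sq_norm, Complex.normSq_apply]
      simp
      ring
    have hw2 : w.re^2 + w.im^2 < 1 := by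
      have h := Complex.sq_norm w
      rw [Complex.normSq_apply] at h
      nlinarith [norm_nonneg w]
    have hA0 := norm_nonneg ((t:ℂ) + w)
    have hB0 := norm_nonneg (1 + (t:ℂ) * w)
    have hdiff : (‖(t:ℂ) + w‖)^2 ≤ (‖1 + (t:ℂ) * w‖)^2 := by
      rw [hA, hB]
      nlinarith [mul_nonneg (by nlinarith : (0:ℝ) ≤ 1 - t^2)
        (by nlinarith : (0:ℝ) ≤ 1 - (w.re^2 + w.im^2))]
    calc ‖(t:ℂ) + w‖ = Real.sqrt ((‖(t:ℂ) + w‖)^2) :=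
          (Real.sqrt_sq hA0).symm
      _ ≤ Real.sqrt ((‖1 + (t:ℂ) * w‖)^2) := Real.sqrt_le_sqrt hdiff
      _ = ‖1 + (t:ℂ) * w‖ := Real.sqrt_sq hB0
  · exact norm_nonneg _


theorem stmt_17 (t : ℝ) (ht0 : 0 ≤ t) (ht1 : t ≤ 1)
    (ω : ℂ → ℂ)
    (hω : ω = fun z : ℂ =>
      ∫ s in (0:ℝ)..1, (((t : ℂ) + ((s : ℂ) * z)^3) / (1 + (t : ℂ) * ((s : ℂ) * z)^3)) * z) :
    DifferentiableOn ℂ ω (ball 0 1) ∧ ω 0 = 0 ∧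
    (∀ z ∈ ball (0:ℂ) 1, ‖deriv ω z‖ ≤ 1) ∧
    ∃ c : ℕ → ℂ,
      (∀ z ∈ ball (0:ℂ) 1, HasSum (fun n : ℕ => c (n + 1) * z ^ (n + 1)) (ω z)) ∧
      c 1 = (t : ℂ) ∧ c 2 = 0 ∧ c 3 = 0 ∧ c 4 = (1 - (t : ℂ)^2) / 4 ∧
      ‖c 4 - c 2^2‖ = (1/4) * (1 - t^2) := by
  subst hω
  have hD : ∀ z ∈ ball (0:ℂ) 1,
      HasDerivAt (fun z : ℂ =>
        ∫ s in (0:ℝ)..1, (((t : ℂ) + ((s : ℂ) * z)^3) / (1 + (t : ℂ) * ((s : ℂ) * z)^3)) * z)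
      (((t : ℂ) + z^3) / (1 + (t : ℂ) * z^3)) z :=
    fun z hz => omega_hasDerivAt t ht0 ht1 hz
  have hc2 : cco t 2 = 0 := by norm_num [cco]
  have hc4 : cco t 4 = (1 - (t : ℂ)^2) / 4 := by
    have h := cco_34 t 0
    norm_num at h
    rw [show (4:ℕ) = 3*0+4 from rfl, cco_34]
    norm_num
  refine ⟨?_, ?_, ?_, cco t, ?_, cco_one t, hc2, ?_, hc4, ?_⟩
  · exact fun z hz => ((hD z hz).differentiableAt).differentiableWithinAt
  · simp
  · intro z hz
    rw [(hD z hz).deriv]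
    exact absG_le t ht0 ht1 (by rwa [mem_ball_zero_iff] at hz)
  · intro z hz
    exact key t ht0 ht1 (by rwa [mem_ball_zero_iff] at hz)
  · norm_num [cco]
  · rw [hc4, hc2]
    rw [show ((1 : ℂ) - (t:ℂ)^2)/4 - 0^2 = (((1 - t^2)/4 : ℝ) : ℂ) from by push_cast; ring,
      Complex.norm_real, Real.norm_eq_abs, _root_.abs_of_nonneg (by nlinarith)]
    ring
end
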